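/- Suppose u(z), v(z) are solutions of Y' = A(z)Y with A(z)ᵀJ + JA(z) = −cJ, c < 0, and suppose there exist real μ₃, μ₄ with μ₃ + μ₄ > −c such that e^{−μ₃ z} u(z) and e^{−μ₄ z} v(z) remain bounded as z → −∞. Then ω(u(z), v(z)) = 0 for all z. -/

import Mathlib

open Matrix Filter

def J4 : Matrix (Fin 4) (Fin 4) ℝ :=
  !![0, 0, 1, 0; 0, 0, 0, -1; -1, 0, 0, 0; 0, 1, 0, 0]

def omega4 (a b : Fin 4 → ℝ) : ℝ := a ⬝ᵥ (J4 *ᵥ b)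

lemma omega4_bound (a b : Fin 4 → ℝ) : |omega4 a b| ≤ 4 * ‖a‖ * ‖b‖ := by
  have ha : ∀ i, |a i| ≤ ‖a‖ := fun i => by
    simpa [Real.norm_eq_abs] using norm_le_pi_norm a i
  have hb : ∀ i, |b i| ≤ ‖b‖ := fun i => by
    simpa [Real.norm_eq_abs] using norm_le_pi_norm b i
  have h0 : (0:ℝ) ≤ ‖a‖ := norm_nonneg _
  have h1 : (0:ℝ) ≤ ‖b‖ := norm_nonneg _
  have hom : omega4 a b = a 0 * b 2 + a 1 * (-b 3) + a 2 * (-b 0) + a 3 * b 1 := by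
    simp [omega4, J4, Matrix.mulVec, dotProduct, Fin.sum_univ_four,
      Matrix.vecHead, Matrix.vecTail]
  rw [hom]
  calc |a 0 * b 2 + a 1 * (-b 3) + a 2 * (-b 0) + a 3 * b 1|
      ≤ |a 0 * b 2 + a 1 * (-b 3) + a 2 * (-b 0)| + |a 3 * b 1| := abs_add_le _ _
    _ ≤ (|a 0 * b 2 + a 1 * (-b 3)| + |a 2 * (-b 0)|) + |a 3 * b 1| := by
        gcongr; exact abs_add_le _ _
    _ ≤ ((|a 0 * b 2| + |a 1 * (-b 3)|) + |a 2 * (-b 0)|) + |a 3 * b 1| := by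
        gcongr; exact abs_add_le _ _
    _ = |a 0| * |b 2| + |a 1| * |b 3| + |a 2| * |b 0| + |a 3| * |b 1| := by
        simp [abs_mul]
    _ ≤ ‖a‖ * ‖b‖ + ‖a‖ * ‖b‖ + ‖a‖ * ‖b‖ + ‖a‖ * ‖b‖ := by
        gcongr <;> first
          | exact ha _ | exact hb _ | exact abs_nonneg _
    _ = 4 * ‖a‖ * ‖b‖ := by ring

theorem stmt_8 (c : ℝ) (hc : c < 0) (A : ℝ → Matrix (Fin 4) (Fin 4) ℝ)
    (hA : ∀ z, (A z)ᵀ * J4 + J4 * A z = (-c) • J4)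
    (u v : ℝ → Fin 4 → ℝ)
    (hu : ∀ z, HasDerivAt u (A z *ᵥ u z) z)
    (hv : ∀ z, HasDerivAt v (A z *ᵥ v z) z)
    (μ₃ μ₄ : ℝ) (hsum : -c < μ₃ + μ₄)
    (hubd : IsBoundedUnder (· ≤ ·) atBot (fun z => ‖Real.exp (-μ₃ * z) • u z‖))
    (hvbd : IsBoundedUnder (· ≤ ·) atBot (fun z => ‖Real.exp (-μ₄ * z) • v z‖)) :
    ∀ z, omega4 (u z) (v z) = 0 := by
  set f : ℝ → ℝ := fun z => omega4 (u z) (v z) with hf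
  -- derivative of f
  have hderiv : ∀ z, HasDerivAt f (-c * f z) z := by
    intro z
    have hui : ∀ i, HasDerivAt (fun z => u z i) ((A z *ᵥ u z) i) z :=
      fun i => hasDerivAt_pi.1 (hu z) i
    have hvi : ∀ i, HasDerivAt (fun z => v z i) ((A z *ᵥ v z) i) z :=
      fun i => hasDerivAt_pi.1 (hv z) i
    have hw : ∀ i, HasDerivAt (fun z => (J4 *ᵥ v z) i) ((J4 *ᵥ (A z *ᵥ v z)) i) z := by
      intro i
      have h1 : (fun z => (J4 *ᵥ v z) i) = fun z => ∑ j, J4 i j * v z j := by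
        funext z; simp [Matrix.mulVec, dotProduct]
      have h2 : ((J4 *ᵥ (A z *ᵥ v z)) i) = ∑ j, J4 i j * (A z *ᵥ v z) j := by
        simp [Matrix.mulVec, dotProduct]
      rw [h1, h2]
      exact HasDerivAt.fun_sum (fun j _ => (hvi j).const_mul _)
    have hsumform : f = fun z => ∑ i, u z i * (J4 *ᵥ v z) i := by
      funext z; simp [hf, omega4, dotProduct]
    have key : (∑ i, ((A z *ᵥ u z) i * (J4 *ᵥ v z) i + u z i * (J4 *ᵥ (A z *ᵥ v z)) i))
        = -c * f z := by
      have h1 : (∑ i, (A z *ᵥ u z) i * (J4 *ᵥ v z) i) = (A z *ᵥ u z) ⬝ᵥ (J4 *ᵥ v z) := rfl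
      have h2 : (∑ i, u z i * (J4 *ᵥ (A z *ᵥ v z)) i) = u z ⬝ᵥ (J4 *ᵥ (A z *ᵥ v z)) := rfl
      rw [Finset.sum_add_distrib, h1, h2]
      have e1 : (A z *ᵥ u z) ⬝ᵥ (J4 *ᵥ v z) = u z ⬝ᵥ (((A z)ᵀ * J4) *ᵥ v z) := by
        rw [dotProduct_mulVec, dotProduct_mulVec, ← Matrix.vecMul_vecMul,
          Matrix.vecMul_transpose]
      have e2 : u z ⬝ᵥ (J4 *ᵥ (A z *ᵥ v z)) = u z ⬝ᵥ ((J4 * A z) *ᵥ v z) := by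
        rw [Matrix.mulVec_mulVec]
      rw [e1, e2, ← dotProduct_add, ← Matrix.add_mulVec, hA z,
        Matrix.smul_mulVec, dotProduct_smul]
      simp [hf, omega4, smul_eq_mul]
    have H : HasDerivAt (fun z => ∑ i, u z i * (J4 *ᵥ v z) i)
        (∑ i, ((A z *ᵥ u z) i * (J4 *ᵥ v z) i + u z i * (J4 *ᵥ (A z *ᵥ v z)) i)) z :=
      HasDerivAt.fun_sum (fun i _ => ((hui i).mul (hw i)))
    rw [key] at H
    exact H
  -- g = exp (c z) * f z is constant
  set g : ℝ → ℝ := fun z => Real.exp (c * z) * f z with hg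
  have hgderiv : ∀ z, HasDerivAt g 0 z := by
    intro z
    have h1 : HasDerivAt (fun z => Real.exp (c * z)) (c * Real.exp (c * z)) z := by
      simpa [mul_comm, Function.comp_def] using (Real.hasDerivAt_exp (c * z)).comp z ((hasDerivAt_id z).const_mul c)
    have := h1.fun_mul (hderiv z)
    rw [show c * Real.exp (c * z) * f z + Real.exp (c * z) * (-c * f z) = 0 by ring] at this
    exact this
  have hgconst : ∀ z, g z = g 0 := fun z =>
    is_const_of_deriv_eq_zero (fun x => (hgderiv x).differentiableAt)
      (fun x => (hgderiv x).deriv) z 0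
  have hg0 : g 0 = f 0 := by simp [hg]
  -- bounds
  obtain ⟨b₁, hb₁⟩ := hubd
  obtain ⟨b₂, hb₂⟩ := hvbd
  rw [eventually_map] at hb₁ hb₂
  have hb1' : ∀ᶠ z in atBot, ‖u z‖ ≤ b₁ * Real.exp (μ₃ * z) := by
    filter_upwards [hb₁] with z hz
    rw [norm_smul, Real.norm_eq_abs, abs_of_pos (Real.exp_pos _)] at hz
    calc ‖u z‖ = Real.exp (μ₃ * z) * (Real.exp (-μ₃ * z) * ‖u z‖) := by
          rw [← mul_assoc, ← Real.exp_add]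
          have : μ₃ * z + -μ₃ * z = 0 := by ring
          rw [this, Real.exp_zero, one_mul]
      _ ≤ Real.exp (μ₃ * z) * b₁ := by
          exact mul_le_mul_of_nonneg_left hz (le_of_lt (Real.exp_pos _))
      _ = b₁ * Real.exp (μ₃ * z) := by ring
  have hb2' : ∀ᶠ z in atBot, ‖v z‖ ≤ b₂ * Real.exp (μ₄ * z) := by
    filter_upwards [hb₂] with z hz
    rw [norm_smul, Real.norm_eq_abs, abs_of_pos (Real.exp_pos _)] at hz
    calc ‖v z‖ = Real.exp (μ₄ * z) * (Real.exp (-μ₄ * z) * ‖v z‖) := by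
          rw [← mul_assoc, ← Real.exp_add]
          have : μ₄ * z + -μ₄ * z = 0 := by ring
          rw [this, Real.exp_zero, one_mul]
      _ ≤ Real.exp (μ₄ * z) * b₂ := by
          exact mul_le_mul_of_nonneg_left hz (le_of_lt (Real.exp_pos _))
      _ = b₂ * Real.exp (μ₄ * z) := by ring
  -- |f 0| ≤ 4 b₁ b₂ exp((c+μ₃+μ₄) z) eventually
  have hbound : ∀ᶠ z in atBot, |f 0| ≤ 4 * b₁ * b₂ * Real.exp ((c + μ₃ + μ₄) * z) := by
    filter_upwards [hb1', hb2'] with z h1 h2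
    have hb₁pos : (0:ℝ) ≤ b₁ * Real.exp (μ₃ * z) := le_trans (norm_nonneg _) h1
    have := omega4_bound (u z) (v z)
    have habs : |f 0| = Real.exp (c * z) * |f z| := by
      rw [← hg0, ← hgconst z]
      rw [hg, abs_mul, abs_of_pos (Real.exp_pos _)]
    rw [habs]
    calc Real.exp (c * z) * |f z|
        ≤ Real.exp (c * z) * (4 * ‖u z‖ * ‖v z‖) := by
          exact mul_le_mul_of_nonneg_left this (le_of_lt (Real.exp_pos _))
      _ ≤ Real.exp (c * z) * (4 * (b₁ * Real.exp (μ₃ * z)) * (b₂ * Real.exp (μ₄ * z))) := by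
          gcongr
      _ = 4 * b₁ * b₂ * (Real.exp (c * z) * Real.exp (μ₃ * z) * Real.exp (μ₄ * z)) := by ring
      _ = 4 * b₁ * b₂ * Real.exp ((c + μ₃ + μ₄) * z) := by
          rw [show (c + μ₃ + μ₄) * z = c * z + μ₃ * z + μ₄ * z by ring,
            Real.exp_add, Real.exp_add]
  -- RHS tends to 0
  have htend : Tendsto (fun z => 4 * b₁ * b₂ * Real.exp ((c + μ₃ + μ₄) * z)) atBot (nhds 0) := by
    have hpos : 0 < c + μ₃ + μ₄ := by linarith
    have h1 : Tendsto (fun z : ℝ => (c + μ₃ + μ₄) * z) atBot atBot :=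
      tendsto_const_mul_atBot_of_pos hpos |>.mpr tendsto_id
    have h2 : Tendsto (fun z : ℝ => Real.exp ((c + μ₃ + μ₄) * z)) atBot (nhds 0) :=
      Real.tendsto_exp_atBot.comp h1
    simpa using h2.const_mul (4 * b₁ * b₂)
  have hf0 : |f 0| ≤ 0 :=
    le_of_tendsto_of_tendsto tendsto_const_nhds htend hbound
  have hf00 : f 0 = 0 := abs_eq_zero.mp (le_antisymm hf0 (abs_nonneg _))
  intro z
  have : Real.exp (c * z) * f z = 0 := by
    have h := hgconst z
    rw [hg0, hf00] at h
    exact h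
  have hne : Real.exp (c * z) ≠ 0 := Real.exp_ne_zero _
  have := mul_eq_zero.mp this
  rcases this with h | h
  · exact absurd h hne
  · exact h
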